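/- In a tree T, let P be a finite set of edges and suppose every vertex v of T has the 'escape' property: some ray from v is disjoint from P. If an oriented edge ē lies in the interior of the convex hull of P but cannot escape (every ray of the form ē · r meets P̂ = P minus the interior of the hull), then every ray of the form ē · r contains exactly one edge of P. -/

import Mathlib

open SimpleGraph

/-- The interior of the convex hull of a set `P` of edges of a graph `G`:
the edges lying strictly between two edges of `P` on a geodesic path whose
first and last edges belong to `P` (the extremal edges are excluded). -/
def interiorEdgeHull {V : Type*} (G : SimpleGraph V) (P : Set (Sym2 V)) :
    Set (Sym2 V) :=
  {e | ∃ (a b : V) (p : G.Walk a b), p.IsPath ∧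
      ∃ e₁ ∈ P, ∃ e₂ ∈ P, ∃ l₁ l₂ : List (Sym2 V),
        p.edges = e₁ :: (l₁ ++ e :: l₂) ++ [e₂]}

section Aux

variable {V : Type*}

/-- The walk along a ray `r` from `r 0` to `r n`. -/
def raySeg (G : SimpleGraph V) (r : ℕ → V) (hadj : ∀ n, G.Adj (r n) (r (n + 1))) :
    (n : ℕ) → G.Walk (r 0) (r n)
  | 0 => Walk.nil
  | n + 1 => (raySeg G r hadj n).concat (hadj n)

lemma raySeg_edges (G : SimpleGraph V) (r : ℕ → V) (hadj : ∀ n, G.Adj (r n) (r (n + 1)))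
    (n : ℕ) :
    (raySeg G r hadj n).edges = (List.range n).map (fun i => s(r i, r (i + 1))) := by
  induction n with
  | zero => simp [raySeg]
  | succ n ih => simp [raySeg, Walk.edges_concat, ih, List.range_succ]

lemma raySeg_support (G : SimpleGraph V) (r : ℕ → V) (hadj : ∀ n, G.Adj (r n) (r (n + 1)))
    (n : ℕ) :
    (raySeg G r hadj n).support = (List.range (n + 1)).map r := by
  induction n with
  | zero => simp [raySeg, List.range_succ]
  | succ n ih => simp [raySeg, Walk.support_concat, ih, List.range_succ]

lemma raySeg_isPath (G : SimpleGraph V) (r : ℕ → V) (hadj : ∀ n, G.Adj (r n) (r (n + 1)))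
    (hinj : Function.Injective r) (n : ℕ) : (raySeg G r hadj n).IsPath := by
  rw [Walk.isPath_def, raySeg_support]
  exact List.nodup_range.map hinj

lemma walk_eq_of_isPath {G : SimpleGraph V} (hacyc : G.IsAcyclic) {x y : V}
    {p q : G.Walk x y} (hp : p.IsPath) (hq : q.IsPath) : p = q := by
  have := (isAcyclic_iff_path_unique.mp hacyc) ⟨p, hp⟩ ⟨q, hq⟩
  exact congrArg Subtype.val this

/-- If a path starting at `u` contains the edge `s(u,c)`, then it starts with it. -/
lemma path_first_step {G : SimpleGraph V} {u b c : V} (w : G.Walk u b) (hw : w.IsPath)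
    (h : s(u, c) ∈ w.edges) :
    ∃ (hadj : G.Adj u c) (w' : G.Walk c b), w = Walk.cons hadj w' := by
  cases w with
  | nil => simp at h
  | cons hadj w' =>
    rw [Walk.edges_cons, List.mem_cons] at h
    rcases h with h | h
    · rw [Sym2.eq_iff] at h
      rcases h with ⟨-, rfl⟩ | ⟨h1, h2⟩
      · exact ⟨hadj, w', rfl⟩
      · exact absurd h1 hadj.ne
    · exfalso
      have hu : u ∈ w'.support := Walk.fst_mem_support_of_mem_edges w' h
      exact ((Walk.cons_isPath_iff hadj w').mp hw).2 hu

lemma exists_incoming_core {G : SimpleGraph V} [DecidableEq V] {a b u v : V}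
    (p : G.Walk a b) (hp : p.IsPath) (hu : u ∈ p.support)
    {e₁ : Sym2 V} {t : List (Sym2 V)} (hed : p.edges = e₁ :: t)
    (hne : e₁ ≠ s(u, v))
    (hmem : s(u, v) ∈ (p.dropUntil u hu).edges) :
    ∃ (c : V) (p₁ : G.Walk c u), p₁.IsPath ∧ s(u, v) ∉ p₁.edges ∧
      ∃ l₁, p₁.edges = e₁ :: l₁ := by
  have hsplit : p.edges = (p.takeUntil u hu).edges ++ (p.dropUntil u hu).edges := by
    conv_lhs => rw [← Walk.take_spec p hu]
    rw [Walk.edges_append]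
  have hnd : ((p.takeUntil u hu).edges ++ (p.dropUntil u hu).edges).Nodup := by
    rw [← hsplit]; exact hp.edges_nodup
  have hnot1 : s(u, v) ∉ (p.takeUntil u hu).edges := by
    intro h
    exact (List.nodup_append'.mp hnd).2.2 h hmem
  have hnonnil : (p.takeUntil u hu).edges ≠ [] := by
    intro h0
    obtain ⟨hadj, w', hw'⟩ := path_first_step _ (hp.dropUntil hu) hmem
    have : p.edges = s(u, v) :: w'.edges := by
      rw [hsplit, h0, hw', Walk.edges_cons]; rfl
    rw [hed] at this
    exact hne (List.head_eq_of_cons_eq this)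
  obtain ⟨x, xs, hx⟩ := List.exists_cons_of_ne_nil hnonnil
  have hxe : x = e₁ := by
    have : p.edges = x :: (xs ++ (p.dropUntil u hu).edges) := by
      rw [hsplit, hx]; rfl
    rw [hed] at this
    exact (List.head_eq_of_cons_eq this).symm
  exact ⟨a, p.takeUntil u hu, hp.takeUntil hu, hnot1, xs, by rw [hx, hxe]⟩

lemma exists_incoming {G : SimpleGraph V} (hacyc : G.IsAcyclic) {P : Set (Sym2 V)}
    {u v : V} (hint : s(u, v) ∈ interiorEdgeHull G P) :
    ∃ (c : V) (p₁ : G.Walk c u), p₁.IsPath ∧ s(u, v) ∉ p₁.edges ∧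
      ∃ e₁ ∈ P, ∃ l₁, p₁.edges = e₁ :: l₁ := by
  classical
  obtain ⟨a, b, p, hp, e₁, he₁, e₂, he₂, l₁, l₂, hed⟩ := hint
  have hmemp : s(u, v) ∈ p.edges := by rw [hed]; simp
  have hu : u ∈ p.support := p.fst_mem_support_of_mem_edges hmemp
  have hnd : p.edges.Nodup := hp.edges_nodup
  rw [hed] at hnd
  have hne1 : e₁ ≠ s(u, v) := by
    intro h
    have h1 := (List.nodup_cons.mp hnd).1
    rw [h] at h1
    exact h1 (by simp)
  have hne2 : e₂ ≠ s(u, v) := by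
    intro h
    have h2 := (List.nodup_cons.mp hnd).2
    have hdisj := (List.nodup_append'.mp h2).2.2
    have hm : s(u, v) ∈ l₁ ++ s(u, v) :: l₂ := by simp
    exact hdisj hm (by simp [h])
  have hsplit : p.edges = (p.takeUntil u hu).edges ++ (p.dropUntil u hu).edges := by
    conv_lhs => rw [← Walk.take_spec p hu]
    rw [Walk.edges_append]
  by_cases hc : s(u, v) ∈ (p.dropUntil u hu).edges
  · obtain ⟨c, p₁, h1, h2, l, h3⟩ := exists_incoming_core p hp hu hed hne1 hc
    exact ⟨c, p₁, h1, h2, e₁, he₁, l, h3⟩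
  · have hq1 : s(u, v) ∈ (p.takeUntil u hu).edges := by
      have := hmemp
      rw [hsplit, List.mem_append] at this
      tauto
    have hu' : u ∈ p.reverse.support := by
      rw [Walk.support_reverse, List.mem_reverse]; exact hu
    have heqw : p.reverse.dropUntil u hu' = (p.takeUntil u hu).reverse :=
      walk_eq_of_isPath hacyc (hp.reverse.dropUntil hu') (hp.takeUntil hu).reverse
    have hmem' : s(u, v) ∈ (p.reverse.dropUntil u hu').edges := by
      rw [heqw, Walk.edges_reverse, List.mem_reverse]; exact hq1
    have hed' : p.reverse.edges = e₂ :: ((l₁ ++ s(u, v) :: l₂).reverse ++ [e₁]) := by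
      rw [Walk.edges_reverse, hed]; simp
    obtain ⟨c, p₁, h1, h2, l, h3⟩ :=
      exists_incoming_core p.reverse hp.reverse hu' hed' hne2 hmem'
    exact ⟨c, p₁, h1, h2, e₂, he₂, l, h3⟩

lemma ray_disjoint {G : SimpleGraph V} (hacyc : G.IsAcyclic) {u v c : V}
    {r : ℕ → V} (hr0 : r 0 = u) (hr1 : r 1 = v) (hrinj : Function.Injective r)
    (hradj : ∀ n, G.Adj (r n) (r (n + 1)))
    (p₁ : G.Walk c u) (hp₁ : p₁.IsPath) (hnot : s(u, v) ∉ p₁.edges)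
    {i : ℕ} (hi : 1 ≤ i) : r i ∉ p₁.support := by
  classical
  intro hmem
  have hπ₁ : (p₁.dropUntil (r i) hmem).IsPath := hp₁.dropUntil hmem
  have hπ₂ : (((raySeg G r hradj i).copy hr0 rfl).reverse).IsPath := by
    apply Walk.IsPath.reverse
    rw [Walk.isPath_copy]
    exact raySeg_isPath G r hradj hrinj i
  have heqw : p₁.dropUntil (r i) hmem = ((raySeg G r hradj i).copy hr0 rfl).reverse :=
    walk_eq_of_isPath hacyc hπ₁ hπ₂
  have hmem2 : s(u, v) ∈ (((raySeg G r hradj i).copy hr0 rfl).reverse).edges := by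
    rw [Walk.edges_reverse, Walk.edges_copy, List.mem_reverse, raySeg_edges]
    refine List.mem_map.mpr ⟨0, List.mem_range.mpr hi, ?_⟩
    rw [hr0, hr1]
  rw [← heqw] at hmem2
  exact hnot (Walk.edges_dropUntil_subset p₁ hmem hmem2)

lemma mem_interior_of_between {G : SimpleGraph V} (hacyc : G.IsAcyclic)
    {P : Set (Sym2 V)} {u v : V} (hint : s(u, v) ∈ interiorEdgeHull G P)
    {r : ℕ → V} (hr0 : r 0 = u) (hr1 : r 1 = v) (hrinj : Function.Injective r)
    (hradj : ∀ n, G.Adj (r n) (r (n + 1))) {k N : ℕ} (hkN : k < N)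
    (hN : s(r N, r (N + 1)) ∈ P) : s(r k, r (k + 1)) ∈ interiorEdgeHull G P := by
  classical
  obtain ⟨c, p₁, hp₁, hnot, e₁, he₁, l₁, hed₁⟩ := exists_incoming hacyc hint
  set f : ℕ → Sym2 V := fun i => s(r i, r (i + 1)) with hf
  set seg : G.Walk u (r (N + 1)) := (raySeg G r hradj (N + 1)).copy hr0 rfl with hseg
  set q : G.Walk c (r (N + 1)) := p₁.append seg with hqdef
  have htail : seg.support.tail = (List.range (N + 1)).map (fun j => r (j + 1)) := by
    rw [hseg, Walk.support_copy, raySeg_support, List.range_succ_eq_map]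
    simp [List.map_map, Function.comp]
  have hq : q.IsPath := by
    rw [Walk.isPath_def, hqdef, Walk.support_append, htail]
    refine List.Nodup.append hp₁.support_nodup
      (List.nodup_range.map fun a b hab => by
        have := hrinj hab; omega) ?_
    intro x hx hx'
    obtain ⟨j, hj, rfl⟩ := List.mem_map.mp hx'
    exact ray_disjoint hacyc hr0 hr1 hrinj hradj p₁ hp₁ hnot (Nat.le_add_left 1 j) hx
  have hqe : q.edges = (e₁ :: l₁) ++ (List.range (N + 1)).map f := by
    rw [hqdef, Walk.edges_append, hed₁, hseg, Walk.edges_copy, raySeg_edges]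
  obtain ⟨A, B, hAB⟩ := List.append_of_mem (List.mem_range.mpr hkN)
  refine ⟨c, r (N + 1), q, hq, e₁, he₁, s(r N, r (N + 1)), hN,
    l₁ ++ A.map f, B.map f, ?_⟩
  rw [hqe, List.range_succ, hAB]
  simp [hf, List.append_assoc]

end Aux

/-- In a locally finite tree with all vertices of degree at least 2, let `P`
be a finite set of edges such that from every vertex there is a ray disjoint
from `P`.  If the oriented edge `(u, v)` lies in the interior of the convex
hull of `P` but cannot escape (every ray starting `u, v, …` meets
`P̂ = P − interior hull`), then every ray starting `u, v, …` contains exactly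
one edge of `P`. -/
theorem no_escape_exactly_one {V : Type*} (G : SimpleGraph V)
    (hconn : G.Connected) (hacyc : G.IsAcyclic) (hlf : G.LocallyFinite)
    (hdeg : ∀ v : V, ∃ a b : V, a ≠ b ∧ G.Adj v a ∧ G.Adj v b)
    (P : Set (Sym2 V)) (hPfin : P.Finite) (hPsub : P ⊆ G.edgeSet)
    (hescape : ∀ v : V, ∃ r : ℕ → V, r 0 = v ∧ Function.Injective r ∧
      (∀ n, G.Adj (r n) (r (n + 1))) ∧ ∀ n, s(r n, r (n + 1)) ∉ P)
    (u v : V) (huv : G.Adj u v) (hint : s(u, v) ∈ interiorEdgeHull G P)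
    (hnoescape : ∀ r : ℕ → V, r 0 = u → r 1 = v → Function.Injective r →
      (∀ n, G.Adj (r n) (r (n + 1))) →
      ∃ n ≥ 1, s(r n, r (n + 1)) ∈ P \ interiorEdgeHull G P) :
    ∀ r : ℕ → V, r 0 = u → r 1 = v → Function.Injective r →
      (∀ n, G.Adj (r n) (r (n + 1))) →
      ∃! n : ℕ, s(r n, r (n + 1)) ∈ P := by
  intro r hr0 hr1 hrinj hradj
  have key : ∀ m n : ℕ, m < n → s(r m, r (m + 1)) ∈ P → s(r n, r (n + 1)) ∈ P → False := by
    intro m n hmn hm hn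
    obtain ⟨r', hr'0, hr'inj, hr'adj, hr'P⟩ := hescape (r (m + 1))
    set s : ℕ → V := fun k => if k ≤ m + 1 then r k else r' (k - (m + 1)) with hs
    have hs_le : ∀ k, k ≤ m + 1 → s k = r k := fun k hk => if_pos hk
    have hs_ge : ∀ k, m + 1 ≤ k → s k = r' (k - (m + 1)) := by
      intro k hk
      rcases eq_or_lt_of_le hk with h | h
      · rw [← h]; simp [hs, hr'0]
      · rw [hs]; simp only [if_neg (by omega : ¬ k ≤ m + 1)]
    have hsadj : ∀ k, G.Adj (s k) (s (k + 1)) := by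
      intro k
      rcases Nat.lt_or_ge k (m + 1) with h | h
      · rw [hs_le k (by omega), hs_le (k + 1) (by omega)]; exact hradj k
      · rw [hs_ge k h, hs_ge (k + 1) (by omega),
          show k + 1 - (m + 1) = (k - (m + 1)) + 1 by omega]
        exact hr'adj _
    have hmixed : ∀ i j, i ≤ m + 1 → m + 1 < j → s i = s j → False := by
      intro i j hi hj hij
      rw [hs_le i hi, hs_ge j (by omega)] at hij
      set t := j - (m + 1) with ht
      have ht1 : 1 ≤ t := by omega
      rcases eq_or_lt_of_le hi with h | h
      · rw [h] at hij
        rw [← hr'0] at hij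
        have := hr'inj hij
        omega
      · have him : i ≤ m := by omega
        -- two paths from r i to r (m+1)
        have hshadj : ∀ a, G.Adj (r (i + a)) (r (i + a + 1)) := fun a => hradj (i + a)
        have hshinj : Function.Injective (fun a => r (i + a)) := by
          intro a b hab
          have := hrinj hab
          omega
        set π₁ : G.Walk (r i) (r (m + 1)) :=
          (raySeg G (fun a => r (i + a)) hshadj (m + 1 - i)).copy rfl
            (congrArg r (by omega)) with hπ₁def
        have hπ₁ : π₁.IsPath := by
          rw [hπ₁def, Walk.isPath_copy]
          exact raySeg_isPath _ _ _ hshinj _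
        set π₂ : G.Walk (r i) (r (m + 1)) :=
          ((raySeg G r' hr'adj t).reverse).copy hij.symm hr'0 with hπ₂def
        have hπ₂ : π₂.IsPath := by
          rw [hπ₂def, Walk.isPath_copy, Walk.isPath_reverse_iff]
          exact raySeg_isPath _ _ _ hr'inj _
        have heqw : π₁ = π₂ := walk_eq_of_isPath hacyc hπ₁ hπ₂
        have hmem1 : s(r m, r (m + 1)) ∈ π₁.edges := by
          rw [hπ₁def, Walk.edges_copy, raySeg_edges]
          refine List.mem_map.mpr ⟨m - i, List.mem_range.mpr (by omega), ?_⟩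
          have h1 : i + (m - i) = m := by omega
          have h2 : i + (m - i + 1) = m + 1 := by omega
          rw [h1, h2]
        rw [heqw, hπ₂def, Walk.edges_copy, Walk.edges_reverse, List.mem_reverse,
          raySeg_edges] at hmem1
        obtain ⟨a, _, ha⟩ := List.mem_map.mp hmem1
        rw [← ha] at hm
        exact hr'P a hm
    have hsinj : Function.Injective s := by
      have main : ∀ i j, i < j → s i = s j → False := by
        intro i j hij heq
        rcases le_or_gt j (m + 1) with hj | hj
        · rw [hs_le i (by omega), hs_le j hj] at heq
          have := hrinj heq; omega
        · rcases le_or_gt i (m + 1) with hi | hi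
          · exact hmixed i j hi hj heq
          · rw [hs_ge i (by omega), hs_ge j (by omega)] at heq
            have := hr'inj heq; omega
      intro i j h
      rcases lt_trichotomy i j with hlt | heq | hgt
      · exact absurd (main i j hlt h) not_false
      · exact heq
      · exact absurd (main j i hgt h.symm) not_false
    have hs0 : s 0 = u := by rw [hs_le 0 (by omega), hr0]
    have hs1 : s 1 = v := by rw [hs_le 1 (by omega), hr1]
    obtain ⟨k, hk1, hkmem⟩ := hnoescape s hs0 hs1 hsinj hsadj
    rcases le_or_gt k m with hkm | hkm
    · have h1 : s k = r k := hs_le k (by omega)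
      have h2 : s (k + 1) = r (k + 1) := hs_le _ (by omega)
      rw [h1, h2] at hkmem
      exact hkmem.2 (mem_interior_of_between hacyc hint hr0 hr1 hrinj hradj
        (lt_of_le_of_lt hkm hmn) hn)
    · have h1 : s k = r' (k - (m + 1)) := hs_ge k (by omega)
      have h2 : s (k + 1) = r' ((k - (m + 1)) + 1) := by
        rw [hs_ge _ (by omega)]
        congr 1
        omega
      rw [h1, h2] at hkmem
      exact hr'P _ hkmem.1
  obtain ⟨n₀, hn₀, hmem⟩ := hnoescape r hr0 hr1 hrinj hradj
  refine ⟨n₀, hmem.1, ?_⟩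
  intro y hy
  rcases lt_trichotomy y n₀ with h | h | h
  · exact (key y n₀ h hy hmem.1).elim
  · exact h
  · exact (key n₀ y h hmem.1 hy).elim
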